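/- Let X be a normed space, C ⊆ X a nonempty convex bounded subset with diameter d_C, T : C → C nonexpansive, and (λ_n)_{n≥1} ⊆ [0,1] with rate of convergence α of λ_n → 0, Cauchy modulus β of ∑_{i=1}^n |λ_{i+1}-λ_i|, and rate of divergence θ of ∑ λ_n. Then for every x ∈ C, lim ‖x_n - Tx_n‖ = 0 for the Halpern iteration (x_n), and for any M ∈ ℕ* with M ≥ 3·d_C, for all ε ∈ (0,2) and all n ≥ max{ θ(β(ε/(8M)) + 1 + ⌈ln(8M/ε)⌉), α(ε/(4M)) }, we have ‖x_n - T x_n‖ < ε. -/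

import Mathlib

set_option maxHeartbeats 1600000

theorem halpern_rate_bounded_C
    {X : Type*} [NormedAddCommGroup X] [NormedSpace ℝ X]
    (C : Set X) (hC : C.Nonempty) (hconv : Convex ℝ C)
    (hCbdd : Bornology.IsBounded C)
    (T : X → X) (hTmaps : Set.MapsTo T C C)
    (hT : ∀ u ∈ C, ∀ v ∈ C, ‖T u - T v‖ ≤ ‖u - v‖)
    (lam : ℕ → ℝ) (hlam : ∀ n ≥ 1, lam n ∈ Set.Icc (0:ℝ) 1)
    (α : ℝ → ℕ) (hαpos : ∀ ε > (0:ℝ), 1 ≤ α ε)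
    (hα : ∀ ε > (0:ℝ), ∀ n : ℕ, α ε ≤ n → |lam n| < ε)
    (β : ℝ → ℕ) (hβpos : ∀ ε > (0:ℝ), 1 ≤ β ε)
    (hβ : ∀ ε > (0:ℝ), ∀ n : ℕ, 1 ≤ n →
      (∑ i ∈ Finset.Icc 1 (β ε + n), |lam (i + 1) - lam i|)
        - (∑ i ∈ Finset.Icc 1 (β ε), |lam (i + 1) - lam i|) < ε)
    (θ : ℕ → ℕ) (hθpos : ∀ n : ℕ, 1 ≤ n → 1 ≤ θ n)
    (hθ : ∀ n : ℕ, 1 ≤ n → (n : ℝ) ≤ ∑ i ∈ Finset.Icc 1 (θ n), lam i)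
    (x₀ : X) (hx₀ : x₀ ∈ C) (x : ℕ → X) (hx0 : x 0 = x₀)
    (hrec : ∀ n : ℕ, x (n + 1) = lam (n + 1) • x₀ + (1 - lam (n + 1)) • T (x n)) :
    Filter.Tendsto (fun n => ‖x n - T (x n)‖) Filter.atTop (nhds 0) ∧
    ∀ M : ℕ, 1 ≤ M → (∀ u ∈ C, 3 * ‖u‖ ≤ (M : ℝ)) →
      ∀ ε : ℝ, 0 < ε → ε < 2 →
        ∀ n : ℕ,
          max (θ (β (ε / (8 * M)) + 1 + ⌈Real.log (8 * M / ε)⌉₊)) (α (ε / (4 * M))) ≤ n →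
          ‖x n - T (x n)‖ < ε := by
  classical
  -- all iterates stay in C
  have hxC : ∀ n, x n ∈ C := by
    intro n
    induction n with
    | zero => rw [hx0]; exact hx₀
    | succ n ih =>
      rw [hrec n]
      have hl := hlam (n+1) (by omega)
      exact hconv hx₀ (hTmaps ih) hl.1 (by linarith [hl.2]) (by ring)
  have hlam0 : ∀ i, 1 ≤ i → 0 ≤ lam i := fun i hi => (hlam i hi).1
  have hlam1 : ∀ i, 1 ≤ i → lam i ≤ 1 := fun i hi => (hlam i hi).2
  -- the quantitative statement (second conjunct)
  have main : ∀ M : ℕ, 1 ≤ M → (∀ u ∈ C, 3 * ‖u‖ ≤ (M : ℝ)) →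
      ∀ ε : ℝ, 0 < ε → ε < 2 →
        ∀ n : ℕ,
          max (θ (β (ε / (8 * M)) + 1 + ⌈Real.log (8 * M / ε)⌉₊)) (α (ε / (4 * M))) ≤ n →
          ‖x n - T (x n)‖ < ε := by
    intro M hM hMC ε hε hε2 n hn
    have hMpos : (0:ℝ) < M := by exact_mod_cast hM
    set D : ℝ := 2 * M / 3 with hDdef
    have hD : 0 < D := by positivity
    have hdiam : ∀ u ∈ C, ∀ v ∈ C, ‖u - v‖ ≤ D := by
      intro u hu v hv
      have h1 := hMC u hu
      have h2 := hMC v hv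
      calc ‖u - v‖ ≤ ‖u‖ + ‖v‖ := norm_sub_le u v
        _ ≤ D := by rw [hDdef]; linarith
    have hε8 : 0 < ε / (8 * M) := by positivity
    have hε4 : 0 < ε / (4 * M) := by positivity
    set s := β (ε / (8 * M)) with hsdef
    set L := ⌈Real.log (8 * M / ε)⌉₊ with hLdef
    have hs1 : 1 ≤ s := hβpos _ hε8
    have hnθ : θ (s + 1 + L) ≤ n := le_trans (le_max_left _ _) hn
    have hnα : α (ε / (4 * M)) ≤ n := le_trans (le_max_right _ _) hn
    have hn1 : 1 ≤ n := le_trans (hθpos _ (by omega)) hnθ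
    -- sum of lam over Icc 1 n is at least s+1+L
    have hsum1 : ((s + 1 + L : ℕ) : ℝ) ≤ ∑ i ∈ Finset.Icc 1 n, lam i := by
      refine le_trans (hθ (s + 1 + L) (by omega)) ?_
      refine Finset.sum_le_sum_of_subset_of_nonneg ?_ ?_
      · exact Finset.Icc_subset_Icc_right hnθ
      · intro i hi _
        exact hlam0 i (Finset.mem_Icc.mp hi).1
    -- each lam ≤ 1, so n ≥ s+1+L
    have hcard : ∑ i ∈ Finset.Icc 1 n, lam i ≤ (n : ℝ) := by
      have := Finset.sum_le_card_nsmul (Finset.Icc 1 n) lam 1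
        (fun i hi => hlam1 i (Finset.mem_Icc.mp hi).1)
      simpa [Nat.card_Icc, nsmul_eq_mul] using this
    have hns : s + 1 + L ≤ n := by
      have : ((s + 1 + L : ℕ) : ℝ) ≤ (n : ℝ) := le_trans hsum1 hcard
      exact_mod_cast this
    -- recursion inequality for consecutive differences
    have ha_rec : ∀ k, ‖x (k+2) - x (k+1)‖ ≤
        (1 - lam (k+2)) * ‖x (k+1) - x k‖ + |lam (k+2) - lam (k+1)| * D := by
      intro k
      have hid : x (k+2) - x (k+1) =
          (lam (k+2) - lam (k+1)) • (x₀ - T (x k))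
            + (1 - lam (k+2)) • (T (x (k+1)) - T (x k)) := by
        rw [hrec (k+1), hrec k]; module
      have h1 : ‖x₀ - T (x k)‖ ≤ D := hdiam _ hx₀ _ (hTmaps (hxC k))
      have h2 : ‖T (x (k+1)) - T (x k)‖ ≤ ‖x (k+1) - x k‖ :=
        hT _ (hxC (k+1)) _ (hxC k)
      have hl2 := hlam (k+2) (by omega)
      have habs : |1 - lam (k+2)| = 1 - lam (k+2) := abs_of_nonneg (by linarith [hl2.2])
      calc ‖x (k+2) - x (k+1)‖
          ≤ ‖(lam (k+2) - lam (k+1)) • (x₀ - T (x k))‖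
            + ‖(1 - lam (k+2)) • (T (x (k+1)) - T (x k))‖ := by
            rw [hid]; exact norm_add_le _ _
        _ = |lam (k+2) - lam (k+1)| * ‖x₀ - T (x k)‖
            + (1 - lam (k+2)) * ‖T (x (k+1)) - T (x k)‖ := by
            rw [norm_smul, norm_smul, Real.norm_eq_abs, Real.norm_eq_abs, habs]
        _ ≤ (1 - lam (k+2)) * ‖x (k+1) - x k‖ + |lam (k+2) - lam (k+1)| * D := by
            have h3 : |lam (k+2) - lam (k+1)| * ‖x₀ - T (x k)‖
                ≤ |lam (k+2) - lam (k+1)| * D :=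
              mul_le_mul_of_nonneg_left h1 (abs_nonneg _)
            have h4 : (1 - lam (k+2)) * ‖T (x (k+1)) - T (x k)‖
                ≤ (1 - lam (k+2)) * ‖x (k+1) - x k‖ :=
              mul_le_mul_of_nonneg_left h2 (by linarith [hl2.2])
            linarith
    set g : ℕ → ℝ := fun i => |lam (i+1) - lam i| with hgdef
    set S : ℕ → ℝ := fun m => ∑ i ∈ Finset.Icc 1 m, g i with hSdef
    have hSmono : ∀ m k, m ≤ k → S m ≤ S k := by
      intro m k hmk
      refine Finset.sum_le_sum_of_subset_of_nonneg (Finset.Icc_subset_Icc_right hmk) ?_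
      intro i _ _; exact abs_nonneg _
    -- the key invariant
    have hinv : ∀ k, s ≤ k → ‖x (k+1) - x k‖ ≤
        (∏ i ∈ Finset.Ico (s+2) (k+2), (1 - lam i)) * ‖x (s+1) - x s‖
          + D * (S k - S s) := by
      intro k hk
      induction k, hk using Nat.le_induction with
      | base => simp
      | succ k hk ih =>
        have hrec2 := ha_rec k
        have hl2 := hlam (k+2) (by omega)
        have h0 : 0 ≤ 1 - lam (k+2) := by linarith [hl2.2]
        have h1 : 1 - lam (k+2) ≤ 1 := by linarith [hl2.1]
        have hP : ∏ i ∈ Finset.Ico (s+2) (k+1+2), (1 - lam i)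
            = (∏ i ∈ Finset.Ico (s+2) (k+2), (1 - lam i)) * (1 - lam (k+2)) :=
          Finset.prod_Ico_succ_top (by omega) _
        have hS : S (k+1) = S k + g (k+1) := by
          simp only [hSdef]
          exact Finset.sum_Icc_succ_top (by omega) g
        have hSs : 0 ≤ S k - S s := by linarith [hSmono s k hk]
        have hm1 : (1 - lam (k+2)) * ‖x (k+1) - x k‖
            ≤ (1 - lam (k+2)) * ((∏ i ∈ Finset.Ico (s+2) (k+2), (1 - lam i)) * ‖x (s+1) - x s‖
                + D * (S k - S s)) := mul_le_mul_of_nonneg_left ih h0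
        have hm3 : (1 - lam (k+2)) * (D * (S k - S s)) ≤ D * (S k - S s) := by
          have : 0 ≤ D * (S k - S s) := mul_nonneg hD.le hSs
          nlinarith
        have hgD : |lam (k+2) - lam (k+1)| * D = D * g (k+1) := by
          simp only [hgdef]; ring_nf
        rw [hP, hS]
        have : (1 - lam (k+2)) * ((∏ i ∈ Finset.Ico (s+2) (k+2), (1 - lam i)) * ‖x (s+1) - x s‖)
            = (∏ i ∈ Finset.Ico (s+2) (k+2), (1 - lam i)) * (1 - lam (k+2)) * ‖x (s+1) - x s‖ := by
          ring
        nlinarith [hrec2, hm1, hm3]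
    -- product bound
    have hsplit : ∑ i ∈ Finset.Ico 1 (s+2), lam i + ∑ i ∈ Finset.Ico (s+2) (n+2), lam i
        = ∑ i ∈ Finset.Ico 1 (n+2), lam i :=
      Finset.sum_Ico_consecutive lam (by omega) (by omega)
    have hIcc1 : ∀ m : ℕ, Finset.Ico 1 (m+1) = Finset.Icc 1 m := by
      intro m; rw [Finset.Ico_add_one_right_eq_Icc]
    have hup : ∑ i ∈ Finset.Icc 1 (s+1), lam i ≤ (s:ℝ) + 1 := by
      have := Finset.sum_le_card_nsmul (Finset.Icc 1 (s+1)) lam 1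
        (fun i hi => hlam1 i (Finset.mem_Icc.mp hi).1)
      have hc : (Finset.Icc 1 (s+1)).card = s + 1 := by simp
      rw [hc, nsmul_eq_mul, mul_one] at this
      exact_mod_cast this
    have hlow : ((s:ℝ) + 1 + L) ≤ ∑ i ∈ Finset.Icc 1 (n+1), lam i := by
      have hstep : ∑ i ∈ Finset.Icc 1 n, lam i ≤ ∑ i ∈ Finset.Icc 1 (n+1), lam i := by
        refine Finset.sum_le_sum_of_subset_of_nonneg
          (Finset.Icc_subset_Icc_right (Nat.le_succ n)) ?_
        intro i hi _; exact hlam0 i (Finset.mem_Icc.mp hi).1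
      have hcast : ((s:ℝ) + 1 + L) = ((s + 1 + L : ℕ) : ℝ) := by push_cast; ring
      rw [hcast]; exact le_trans hsum1 hstep
    have htail : (L:ℝ) ≤ ∑ i ∈ Finset.Ico (s+2) (n+2), lam i := by
      have e1 : ∑ i ∈ Finset.Ico 1 (s+2), lam i = ∑ i ∈ Finset.Icc 1 (s+1), lam i := by
        rw [← hIcc1 (s+1)]
      have e2 : ∑ i ∈ Finset.Ico 1 (n+2), lam i = ∑ i ∈ Finset.Icc 1 (n+1), lam i := by
        rw [← hIcc1 (n+1)]
      rw [e1, e2] at hsplit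
      linarith
    have hlog : Real.log (8 * M / ε) ≤ (L:ℝ) := Nat.le_ceil _
    have h8M : (0:ℝ) < 8 * M / ε := by positivity
    have hprod : ∏ i ∈ Finset.Ico (s+2) (n+2), (1 - lam i) ≤ ε / (8 * M) := by
      calc ∏ i ∈ Finset.Ico (s+2) (n+2), (1 - lam i)
          ≤ ∏ i ∈ Finset.Ico (s+2) (n+2), Real.exp (-lam i) := by
            refine Finset.prod_le_prod ?_ ?_
            · intro i hi
              have := hlam1 i (by have := (Finset.mem_Ico.mp hi).1; omega)
              linarith
            · intro i _
              have := Real.add_one_le_exp (-lam i)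
              linarith
        _ = Real.exp (-∑ i ∈ Finset.Ico (s+2) (n+2), lam i) := by
            rw [← Real.exp_sum]; congr 1; rw [← Finset.sum_neg_distrib]
        _ ≤ Real.exp (-(L:ℝ)) := Real.exp_le_exp.mpr (by linarith)
        _ ≤ Real.exp (-Real.log (8 * M / ε)) := Real.exp_le_exp.mpr (by linarith)
        _ = ε / (8 * M) := by
            rw [Real.exp_neg, Real.exp_log h8M, inv_div]
    have hPnn : 0 ≤ ∏ i ∈ Finset.Ico (s+2) (n+2), (1 - lam i) :=
      Finset.prod_nonneg fun i hi => by
        have := hlam1 i (by have := (Finset.mem_Ico.mp hi).1; omega); linarith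
    -- sum bound
    have hΔ : S n - S s < ε / (8 * M) := by
      have h := hβ (ε / (8 * M)) hε8 (n - s) (by omega)
      have he : β (ε / (8 * M)) + (n - s) = n := by omega
      rw [he] at h
      exact h
    clear_value S g L s D
    -- lam (n+1) bound
    have hln1 : lam (n+1) < ε / (4 * M) := by
      have h := hα _ hε4 (n+1) (le_trans hnα (Nat.le_succ n))
      rwa [abs_of_nonneg (hlam0 _ (by omega))] at h
    -- assemble
    have has : ‖x (s+1) - x s‖ ≤ D := hdiam _ (hxC _) _ (hxC _)
    have ha := hinv n (by omega)
    have haP : (∏ i ∈ Finset.Ico (s+2) (n+2), (1 - lam i)) * ‖x (s+1) - x s‖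
        ≤ (ε / (8 * M)) * D :=
      mul_le_mul hprod has (norm_nonneg _) (by positivity)
    have haΔ : D * (S n - S s) < D * (ε / (8 * M)) :=
      mul_lt_mul_of_pos_left hΔ hD
    have han : ‖x (n+1) - x n‖ < ε / (4 * M) * D := by
      have heq : (ε / (8 * M)) * D + D * (ε / (8 * M)) = ε / (4 * M) * D := by ring
      linarith only [ha, haP, haΔ, heq]
    have hkey : x (n+1) - T (x n) = lam (n+1) • (x₀ - T (x n)) := by
      rw [hrec n]; module
    have hfin : ‖x n - T (x n)‖ ≤ ‖x (n+1) - x n‖ + lam (n+1) * D := by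
      calc ‖x n - T (x n)‖ ≤ ‖x n - x (n+1)‖ + ‖x (n+1) - T (x n)‖ := by
            have : x n - T (x n) = (x n - x (n+1)) + (x (n+1) - T (x n)) := by abel
            rw [this]; exact norm_add_le _ _
        _ = ‖x (n+1) - x n‖ + |lam (n+1)| * ‖x₀ - T (x n)‖ := by
            rw [norm_sub_rev, hkey, norm_smul, Real.norm_eq_abs]
        _ ≤ ‖x (n+1) - x n‖ + lam (n+1) * D := by
            rw [abs_of_nonneg (hlam0 _ (by omega))]
            have := mul_le_mul_of_nonneg_left (hdiam _ hx₀ _ (hTmaps (hxC n)))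
              (hlam0 (n+1) (by omega))
            linarith
    have hDM : ε / (4 * M) * D + ε / (4 * M) * D = ε / 3 := by
      rw [hDdef]; field_simp; ring
    have hlamD : lam (n+1) * D < ε / (4 * M) * D :=
      mul_lt_mul_of_pos_right hln1 hD
    linarith only [hfin, han, hlamD, hDM, hε]
  refine ⟨?_, main⟩
  -- tendsto part
  obtain ⟨R, hR⟩ := isBounded_iff_forall_norm_le.mp hCbdd
  have hR0 : 0 ≤ R := le_trans (norm_nonneg _) (hR _ hC.some_mem)
  set M : ℕ := max 1 ⌈3 * R⌉₊ with hMdef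
  have hM : 1 ≤ M := le_max_left _ _
  have hMC : ∀ u ∈ C, 3 * ‖u‖ ≤ (M : ℝ) := by
    intro u hu
    have h1 : 3 * ‖u‖ ≤ 3 * R := by linarith [hR u hu]
    have h2 : (3 * R : ℝ) ≤ (⌈3 * R⌉₊ : ℝ) := Nat.le_ceil _
    have h3 : (⌈3 * R⌉₊ : ℝ) ≤ (M : ℝ) := by exact_mod_cast le_max_right 1 ⌈3 * R⌉₊
    linarith
  rw [Metric.tendsto_atTop]
  intro ε hε
  set ε' : ℝ := min ε 1 with hε'def
  have hε'pos : 0 < ε' := lt_min hε one_pos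
  have hε'2 : ε' < 2 := lt_of_le_of_lt (min_le_right _ _) one_lt_two
  refine ⟨max (θ (β (ε' / (8 * M)) + 1 + ⌈Real.log (8 * M / ε')⌉₊)) (α (ε' / (4 * M))), ?_⟩
  intro n hn
  have h := main M hM hMC ε' hε'pos hε'2 n hn
  rw [Real.dist_eq, sub_zero, abs_of_nonneg (norm_nonneg _)]
  exact lt_of_lt_of_le h (min_le_left _ _)
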